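/- Let (Ω, H, P) be a probability space, let (H_t)_{t≥0} be a filtration of sub-σ-algebras of H, and let K₁ ⊆ K₂ be two sub-σ-algebras of H. Let (U¹_t)_{t≥0} and (U²_t)_{t≥0} be real-valued integrable processes such that: for every t ≥ 0, U¹_t is K₂-measurable and U²_t is H_t-measurable; for all 0 ≤ s ≤ t, E[U¹_t | H_s ⊔ K₁] = U¹_s P-a.s. and E[U²_t | H_s ⊔ K₂] = U²_s P-a.s.; and E|U¹_t U²_t| < ∞ for every t ≥ 0. Then for all 0 ≤ s ≤ t, E[U¹_t U²_t | H_s ⊔ K₁] = U¹_s U²_s P-a.s.; that is, the product U¹_t U²_t is a martingale with respect to (H_t) given K₁. -/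

import Mathlib

open MeasureTheory Filter
open scoped NNReal

/-- Lemma 2.2 (product of conditional martingales): if `U¹` is a martingale with
respect to `(H_t)` given `K₁`, `U²` is a martingale with respect to `(H_t)` given `K₂`,
`K₁ ⊆ K₂`, `U¹_t` is `K₂`-measurable, `U²_t` is `H_t`-measurable and the products are
integrable, then `U¹ U²` is a martingale with respect to `(H_t)` given `K₁`. -/
theorem product_conditional_martingale
    {Ω : Type*} [m0 : MeasurableSpace Ω] (P : Measure Ω) [IsProbabilityMeasure P]
    (H : ℝ≥0 → MeasurableSpace Ω) (hH_mono : Monotone H) (hH_le : ∀ t, H t ≤ m0)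
    (K1 K2 : MeasurableSpace Ω) (hK12 : K1 ≤ K2) (hK2 : K2 ≤ m0)
    (U1 U2 : ℝ≥0 → Ω → ℝ)
    (hU1_int : ∀ t, Integrable (U1 t) P) (hU2_int : ∀ t, Integrable (U2 t) P)
    (hU1_meas : ∀ t, Measurable[K2] (U1 t))
    (hU2_meas : ∀ t, Measurable[H t] (U2 t))
    (hU1_mart : ∀ s t, s ≤ t → P[U1 t | H s ⊔ K1] =ᵐ[P] U1 s)
    (hU2_mart : ∀ s t, s ≤ t → P[U2 t | H s ⊔ K2] =ᵐ[P] U2 s)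
    (h_prod_int : ∀ t, Integrable (fun ω => U1 t ω * U2 t ω) P) :
    ∀ s t, s ≤ t →
      P[fun ω => U1 t ω * U2 t ω | H s ⊔ K1] =ᵐ[P] fun ω => U1 s ω * U2 s ω := by
  intro s t hst
  have hm2 : H s ⊔ K2 ≤ m0 := sup_le (hH_le s) hK2
  have hm1 : H s ⊔ K1 ≤ m0 := sup_le (hH_le s) (hK12.trans hK2)
  have hm12 : H s ⊔ K1 ≤ H s ⊔ K2 := sup_le_sup_left hK12 _
  -- Step 1: conditional expectation given H s ⊔ K2
  have h1 : P[fun ω => U1 t ω * U2 t ω | H s ⊔ K2] =ᵐ[P]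
      fun ω => U1 t ω * U2 s ω := by
    have hf : StronglyMeasurable[H s ⊔ K2] (U1 t) :=
      ((hU1_meas t).mono (le_sup_right (a := H s)) le_rfl).stronglyMeasurable
    have := condExp_mul_of_stronglyMeasurable_left hf
      (μ := P) (g := U2 t) (h_prod_int t) (hU2_int t)
    refine this.trans ?_
    filter_upwards [hU2_mart s t hst] with ω hω
    simp [Pi.mul_apply, hω]
  -- integrability of U1 t * U2 s
  have h1_int : Integrable (fun ω => U1 t ω * U2 s ω) P :=
    (integrable_condExp (m := H s ⊔ K2)
      (f := fun ω => U1 t ω * U2 t ω) (μ := P)).congr h1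
  -- Step 2: tower property
  have h2 : P[fun ω => U1 t ω * U2 t ω | H s ⊔ K1] =ᵐ[P]
      P[fun ω => U1 t ω * U2 s ω | H s ⊔ K1] := by
    refine (condExp_condExp_of_le hm12 hm2 (f := fun ω => U1 t ω * U2 t ω)
      (μ := P)).symm.trans ?_
    exact condExp_congr_ae h1
  -- Step 3: pull out U2 s
  have h3 : P[fun ω => U2 s ω * U1 t ω | H s ⊔ K1] =ᵐ[P]
      fun ω => U2 s ω * U1 s ω := by
    have hf : StronglyMeasurable[H s ⊔ K1] (U2 s) :=
      ((hU2_meas s).mono (le_sup_left (b := K1)) le_rfl).stronglyMeasurable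
    have h1_int' : Integrable (fun ω => U2 s ω * U1 t ω) P := by
      simpa [mul_comm] using h1_int
    have := condExp_mul_of_stronglyMeasurable_left hf (μ := P) (g := U1 t) h1_int' (hU1_int t)
    refine this.trans ?_
    filter_upwards [hU1_mart s t hst] with ω hω
    simp [Pi.mul_apply, hω]
  refine h2.trans ?_
  have : (fun ω => U1 t ω * U2 s ω) = fun ω => U2 s ω * U1 t ω := by
    funext ω; ring
  rw [this]
  refine h3.trans ?_
  filter_upwards with ω
  ring
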